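/- Let n ≥ 1 and suppose M_k is invertible for every k ∈ ℤ. Set c_k^T := e_n^T M_k^{-1}. If (x, u) and (x', u') are two solutions of the system whose output sequences coincide, i.e., c_k^T x_k = c_k^T x'_k for all k ∈ ℤ, then x_k = x'_k and u_k = u'_k for all k ∈ ℤ. -/

import Mathlib

open Matrix BigOperators

noncomputable section

/-- `Pmat n A k j = A (k-1) * A (k-2) * ⋯ * A (k-j)` (product of `j` factors, `Pmat n A k 0 = 1`). -/
def Pmat (n : ℕ) (A : ℤ → Matrix (Fin n) (Fin n) ℝ) (k : ℤ) : ℕ → Matrix (Fin n) (Fin n) ℝ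
  | 0 => 1
  | j + 1 => Pmat n A k j * A (k - ((j : ℤ) + 1))

/-- The matrix `M_k` whose `j`-th column is `P_k^{(j)} b_{k-1-j}`. -/
def Mmat (n : ℕ) (A : ℤ → Matrix (Fin n) (Fin n) ℝ) (b : ℤ → Fin n → ℝ) (k : ℤ) :
    Matrix (Fin n) (Fin n) ℝ :=
  Matrix.of fun i j => (Pmat n A k (j : ℕ) *ᵥ b (k - 1 - ((j : ℕ) : ℤ))) i

/-- The last standard basis vector `e_n` of `ℝ^n`. -/
def elast (n : ℕ) : Fin n → ℝ := fun i => if (i : ℕ) = n - 1 then 1 else 0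

/-- The row vector `c_k^T := e_n^T M_k^{-1}`. -/
def cvec (n : ℕ) (A : ℤ → Matrix (Fin n) (Fin n) ℝ) (b : ℤ → Fin n → ℝ) (k : ℤ) :
    Fin n → ℝ :=
  elast n ᵥ* (Mmat n A b k)⁻¹

/-- The matrix `Θ_k` whose `i`-th row is `c_{k+i}^T A_{k+i-1} ⋯ A_k`. -/
def Theta (n : ℕ) (A : ℤ → Matrix (Fin n) (Fin n) ℝ) (b : ℤ → Fin n → ℝ) (k : ℤ) :
    Matrix (Fin n) (Fin n) ℝ :=
  Matrix.of fun i j => (cvec n A b (k + (i : ℕ)) ᵥ* Pmat n A (k + (i : ℕ)) (i : ℕ)) j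

/-- The transformed dynamics matrix `Ā_k := Θ_{k+1} A_k Θ_k^{-1}`. -/
def Abar (n : ℕ) (A : ℤ → Matrix (Fin n) (Fin n) ℝ) (b : ℤ → Fin n → ℝ) (k : ℤ) :
    Matrix (Fin n) (Fin n) ℝ :=
  Theta n A b (k + 1) * A k * (Theta n A b k)⁻¹

variable {n : ℕ} (A : ℤ → Matrix (Fin n) (Fin n) ℝ) (b : ℤ → Fin n → ℝ)

lemma Pmat_mul (k : ℤ) (i j : ℕ) :
    Pmat n A (k + i) i * Pmat n A k j = Pmat n A (k + i) (i + j) := by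
  induction j with
  | zero => simp [Pmat]
  | succ j ih =>
    show Pmat n A (k + i) i * (Pmat n A k j * A (k - ((j : ℤ) + 1))) = Pmat n A (k+i) (i + j + 1)
    rw [← mul_assoc, ih]
    show _ = Pmat n A (k + i) (i + j) * A ((k + i) - (((i + j : ℕ) : ℤ) + 1))
    congr 2
    push_cast; ring

lemma Pmat_left (k : ℤ) (j : ℕ) :
    Pmat n A (k + 1) (j + 1) = A k * Pmat n A k j := by
  induction j with
  | zero => simp [Pmat]
  | succ j ih =>
    show Pmat n A (k + 1) (j + 1) * A ((k+1) - (((j+1 : ℕ) : ℤ) + 1)) = A k * (Pmat n A k j * A (k - ((j:ℤ)+1)))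
    rw [ih, mul_assoc]
    congr 2
    push_cast; ring

lemma cvec_Mmat (hM : IsUnit (Mmat n A b k)) :
    cvec n A b k ᵥ* Mmat n A b k = elast n := by
  unfold cvec
  rw [vecMul_vecMul, nonsing_inv_mul _ ((Matrix.isUnit_iff_isUnit_det _).mp hM), vecMul_one]

lemma cvec_delta (k : ℤ) (hM : IsUnit (Mmat n A b k)) (m : ℕ) (hm : m < n) :
    cvec n A b k ⬝ᵥ (Pmat n A k m *ᵥ b (k - 1 - (m : ℤ))) = if m = n - 1 then 1 else 0 := by
  have h := congrFun (cvec_Mmat A b hM) ⟨m, hm⟩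
  simpa [vecMul, Mmat, dotProduct, elast] using h

lemma theta_delta (k : ℤ) (hM : ∀ k : ℤ, IsUnit (Mmat n A b k)) (i j : ℕ) (hij : i + j < n) :
    (cvec n A b (k + (i:ℤ)) ᵥ* Pmat n A (k + (i:ℤ)) i) ⬝ᵥ (Pmat n A k j *ᵥ b (k - 1 - (j:ℤ)))
      = if i + j = n - 1 then 1 else 0 := by
  rw [← dotProduct_mulVec, mulVec_mulVec, Pmat_mul]
  have hb : k - 1 - (j:ℤ) = (k + (i:ℤ)) - 1 - ((i + j : ℕ) : ℤ) := by push_cast; ring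
  rw [hb, cvec_delta A b _ (hM _) _ hij]

lemma diff_sol (d : ℤ → Fin n → ℝ) (v : ℤ → ℝ)
    (hd : ∀ k : ℤ, d (k + 1) = A k *ᵥ d k + v k • b k) (i : ℕ) (k : ℤ) :
    d (k + (i:ℤ)) = Pmat n A (k + (i:ℤ)) i *ᵥ d k
      + ∑ m ∈ Finset.range i, v (k + (i:ℤ) - 1 - (m:ℤ)) •
          (Pmat n A (k + (i:ℤ)) m *ᵥ b (k + (i:ℤ) - 1 - (m:ℤ))) := by
  induction i with
  | zero => simp [Pmat]
  | succ i ih =>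
    have h1 : k + ((i:ℤ) + 1) = (k + (i:ℤ)) + 1 := by ring
    have key : d (k + ((i+1:ℕ):ℤ)) = A (k + (i:ℤ)) *ᵥ d (k + (i:ℤ)) + v (k + (i:ℤ)) • b (k + (i:ℤ)) := by
      push_cast; rw [h1]; exact hd _
    rw [key, ih, mulVec_add]
    have hsum : ∀ (M : Matrix (Fin n) (Fin n) ℝ) (s : Finset ℕ) (f : ℕ → Fin n → ℝ),
        M *ᵥ (∑ m ∈ s, f m) = ∑ m ∈ s, M *ᵥ f m := fun M s f => by
      exact map_sum M.mulVecLin f s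
    rw [hsum]
    rw [Finset.sum_range_succ']
    have hP : ∀ m : ℕ, A (k + (i:ℤ)) *ᵥ (v (k + (i:ℤ) - 1 - (m:ℤ)) •
        (Pmat n A (k + (i:ℤ)) m *ᵥ b (k + (i:ℤ) - 1 - (m:ℤ))))
        = v (k + ((i+1:ℕ):ℤ) - 1 - ((m+1:ℕ):ℤ)) •
          (Pmat n A (k + ((i+1:ℕ):ℤ)) (m+1) *ᵥ b (k + ((i+1:ℕ):ℤ) - 1 - ((m+1:ℕ):ℤ))) := by
      intro m
      have harg : k + ((i+1:ℕ):ℤ) - 1 - ((m+1:ℕ):ℤ) = k + (i:ℤ) - 1 - (m:ℤ) := by push_cast; ring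
      have hPm : Pmat n A (k + ((i+1:ℕ):ℤ)) (m+1) = A (k + (i:ℤ)) * Pmat n A (k + (i:ℤ)) m := by
        have := Pmat_left A (k + (i:ℤ)) m
        rw [← this]; congr 1
      rw [harg, hPm, mulVec_smul, mulVec_mulVec]
    have hP2 : Pmat n A (k + ((i+1:ℕ):ℤ)) (i+1) *ᵥ d k
        = A (k + (i:ℤ)) *ᵥ (Pmat n A (k + (i:ℤ)) i *ᵥ d k) := by
      have hPm : Pmat n A (k + ((i+1:ℕ):ℤ)) (i+1) = A (k + (i:ℤ)) * Pmat n A (k + (i:ℤ)) i := by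
        have := Pmat_left A (k + (i:ℤ)) i
        rw [← this]; congr 1
      rw [hPm, mulVec_mulVec]
    have hterm0 : v (k + ((i+1:ℕ):ℤ) - 1 - ((0:ℕ):ℤ)) •
        (Pmat n A (k + ((i+1:ℕ):ℤ)) 0 *ᵥ b (k + ((i+1:ℕ):ℤ) - 1 - ((0:ℕ):ℤ)))
        = v (k + (i:ℤ)) • b (k + (i:ℤ)) := by
      have harg : k + ((i+1:ℕ):ℤ) - 1 - ((0:ℕ):ℤ) = k + (i:ℤ) := by push_cast; ring
      rw [harg]; simp [Pmat]
    have hsc : ∑ m ∈ Finset.range i, A (k + (i:ℤ)) *ᵥ (v (k + (i:ℤ) - 1 - (m:ℤ)) •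
        (Pmat n A (k + (i:ℤ)) m *ᵥ b (k + (i:ℤ) - 1 - (m:ℤ))))
        = ∑ m ∈ Finset.range i, v (k + ((i+1:ℕ):ℤ) - 1 - ((m+1:ℕ):ℤ)) •
          (Pmat n A (k + ((i+1:ℕ):ℤ)) (m+1) *ᵥ b (k + ((i+1:ℕ):ℤ) - 1 - ((m+1:ℕ):ℤ))) :=
      Finset.sum_congr rfl fun m _ => hP m
    rw [hP2, hsc, hterm0]
    abel

lemma theta_unit (hn : 1 ≤ n) (hM : ∀ k : ℤ, IsUnit (Mmat n A b k)) (k : ℤ) :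
    IsUnit (Theta n A b k) := by
  set R := Theta n A b k * Mmat n A b k with hR
  have hRentry : ∀ i j : Fin n, (i:ℕ) + (j:ℕ) < n →
      R i j = if (i:ℕ) + (j:ℕ) = n - 1 then 1 else 0 := by
    intro i j hij
    have : R i j = (cvec n A b (k + ((i:ℕ):ℤ)) ᵥ* Pmat n A (k + ((i:ℕ):ℤ)) (i:ℕ)) ⬝ᵥ
        (Pmat n A k (j:ℕ) *ᵥ b (k - 1 - ((j:ℕ):ℤ))) := by
      simp [hR, Matrix.mul_apply, Theta, Mmat, dotProduct]
    rw [this, theta_delta A b k hM _ _ hij]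
  -- L = R with columns reversed is lower triangular with unit diagonal
  set L := R.submatrix id (Fin.revPerm : Equiv.Perm (Fin n)) with hL
  have hLtri : L.BlockTriangular OrderDual.toDual := by
    intro p q hpq
    have hpq' : (p:ℕ) < (q:ℕ) := hpq
    have hlt : (p:ℕ) + ((q.rev:ℕ)) < n := by
      have : (q.rev : ℕ) = n - 1 - (q:ℕ) := Fin.val_rev q ▸ by omega
      omega
    have : L p q = R p q.rev := rfl
    rw [this, hRentry _ _ hlt, if_neg]
    have hq : (q.rev : ℕ) = n - 1 - (q:ℕ) := by
      rw [Fin.val_rev]; omega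
    omega
  have hLdet : L.det = 1 := by
    rw [Matrix.det_of_lowerTriangular L hLtri]
    apply Finset.prod_eq_one
    intro p _
    have hlt : (p:ℕ) + ((p.rev:ℕ)) < n := by
      have : (p.rev : ℕ) = n - 1 - (p:ℕ) := by rw [Fin.val_rev]; omega
      omega
    have : L p p = R p p.rev := rfl
    rw [this, hRentry _ _ hlt, if_pos]
    have : (p.rev : ℕ) = n - 1 - (p:ℕ) := by rw [Fin.val_rev]; omega
    omega
  have hRdet : IsUnit R.det := by
    have := Matrix.det_permute' (Fin.revPerm : Equiv.Perm (Fin n)) R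
    rw [← hL] at this
    rw [hLdet] at this
    have hsgn : ((Equiv.Perm.sign (Fin.revPerm : Equiv.Perm (Fin n)) : ℤ) : ℝ) ≠ 0 := by
      rcases Int.units_eq_one_or (Equiv.Perm.sign (Fin.revPerm : Equiv.Perm (Fin n))) with h | h <;>
        simp [h]
    have : R.det = (((Equiv.Perm.sign (Fin.revPerm : Equiv.Perm (Fin n)) : ℤ) : ℝ))⁻¹ := by
      field_simp at this ⊢
      linarith [this]
    rw [this]
    exact IsUnit.inv (Ne.isUnit hsgn)
  have : IsUnit (Theta n A b k).det := by
    have hdet : (Theta n A b k).det * (Mmat n A b k).det = R.det := (Matrix.det_mul _ _).symm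
    have hMdet := (Matrix.isUnit_iff_isUnit_det _).mp (hM k)
    rcases isUnit_iff_ne_zero.mp hRdet with hne
    rw [← hdet] at hne
    exact isUnit_iff_ne_zero.mpr (left_ne_zero_of_mul hne)
  exact (Matrix.isUnit_iff_isUnit_det _).mpr this

lemma b_ne_zero (hn : 1 ≤ n) (hM : ∀ k : ℤ, IsUnit (Mmat n A b k)) (k : ℤ) : b k ≠ 0 := by
  intro hb
  set j0 : Fin n := ⟨0, hn⟩
  have hcol : Mmat n A b (k+1) *ᵥ Pi.single j0 1 = 0 := by
    funext i
    have : (Mmat n A b (k+1) *ᵥ Pi.single j0 1) i = Mmat n A b (k+1) i j0 := by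
      simp [mulVec, dotProduct, Pi.single_apply]
    rw [this]
    have : Mmat n A b (k+1) i j0 = (Pmat n A (k+1) 0 *ᵥ b (k + 1 - 1 - ((0:ℕ):ℤ))) i := rfl
    rw [this]
    have harg : k + 1 - 1 - ((0:ℕ):ℤ) = k := by push_cast; ring
    rw [harg]
    simp [Pmat, hb]
  have hinj : (Pi.single j0 1 : Fin n → ℝ) = 0 := by
    have h2 : (Mmat n A b (k+1))⁻¹ *ᵥ (Mmat n A b (k+1) *ᵥ Pi.single j0 1) = Pi.single j0 1 := by
      rw [mulVec_mulVec, nonsing_inv_mul _ ((Matrix.isUnit_iff_isUnit_det _).mp (hM (k+1))),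
        one_mulVec]
    rw [hcol, mulVec_zero] at h2
    exact h2.symm
  have := congrFun hinj j0
  simp at this

/-- if two solutions `(x, u)` and `(x', u')` have the same output sequence
`c_k^T x_k = c_k^T x'_k` for all `k`, then they coincide: `x_k = x'_k` and `u_k = u'_k`
for all `k`. -/
theorem stmt8 (n : ℕ) (hn : 1 ≤ n)
    (A : ℤ → Matrix (Fin n) (Fin n) ℝ) (b : ℤ → Fin n → ℝ)
    (hM : ∀ k : ℤ, IsUnit (Mmat n A b k))
    (x x' : ℤ → Fin n → ℝ) (u u' : ℤ → ℝ)
    (hsol : ∀ k : ℤ, x (k + 1) = A k *ᵥ x k + u k • b k)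
    (hsol' : ∀ k : ℤ, x' (k + 1) = A k *ᵥ x' k + u' k • b k)
    (hy : ∀ k : ℤ, cvec n A b k ⬝ᵥ x k = cvec n A b k ⬝ᵥ x' k) :
    (∀ k : ℤ, x k = x' k) ∧ (∀ k : ℤ, u k = u' k) := by
  set d : ℤ → Fin n → ℝ := fun k => x k - x' k with hd
  set v : ℤ → ℝ := fun k => u k - u' k with hv
  have hdsol : ∀ k : ℤ, d (k + 1) = A k *ᵥ d k + v k • b k := by
    intro k
    simp only [hd, hv, hsol k, hsol' k]
    rw [mulVec_sub]
    funext i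
    simp [sub_smul]
    ring
  have hyd : ∀ k : ℤ, cvec n A b k ⬝ᵥ d k = 0 := by
    intro k
    simp only [hd]
    rw [dotProduct_sub, hy k, sub_self]
  have hTd : ∀ k : ℤ, Theta n A b k *ᵥ d k = 0 := by
    intro k
    funext i
    have hrow : (Theta n A b k *ᵥ d k) i
        = (cvec n A b (k + ((i:ℕ):ℤ)) ᵥ* Pmat n A (k + ((i:ℕ):ℤ)) (i:ℕ)) ⬝ᵥ d k := by
      simp [mulVec, Theta, dotProduct]
    rw [hrow]
    have hds := diff_sol A b d v hdsol (i:ℕ) k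
    have hdot := congrArg (fun w => cvec n A b (k + ((i:ℕ):ℤ)) ⬝ᵥ w) hds
    simp only [dotProduct_add] at hdot
    rw [hyd (k + ((i:ℕ):ℤ))] at hdot
    have hsum0 : cvec n A b (k + ((i:ℕ):ℤ)) ⬝ᵥ
        (∑ m ∈ Finset.range (i:ℕ), v (k + ((i:ℕ):ℤ) - 1 - (m:ℤ)) •
          (Pmat n A (k + ((i:ℕ):ℤ)) m *ᵥ b (k + ((i:ℕ):ℤ) - 1 - (m:ℤ)))) = 0 := by
      have hdps : ∀ (c : Fin n → ℝ) (s : Finset ℕ) (f : ℕ → Fin n → ℝ),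
          c ⬝ᵥ (∑ m ∈ s, f m) = ∑ m ∈ s, c ⬝ᵥ f m := by
        intro c s f
        simp only [dotProduct, Finset.sum_apply, Finset.mul_sum]
        rw [Finset.sum_comm]
      rw [hdps]
      apply Finset.sum_eq_zero
      intro m hm
      have hmi : m < (i:ℕ) := Finset.mem_range.mp hm
      have hmn : m < n := lt_trans hmi i.isLt
      rw [dotProduct_smul]
      have harg : k + ((i:ℕ):ℤ) - 1 - (m:ℤ) = (k + ((i:ℕ):ℤ)) - 1 - (m:ℤ) := by ring
      rw [harg, cvec_delta A b _ (hM _) m hmn, if_neg (by omega)]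
      simp
    rw [hsum0] at hdot
    have h0 : cvec n A b (k + ((i:ℕ):ℤ)) ⬝ᵥ (Pmat n A (k + ((i:ℕ):ℤ)) (i:ℕ) *ᵥ d k) = 0 := by
      have := hdot
      simp at this
      linarith [this]
    rw [← dotProduct_mulVec]
    simpa using h0
  have hd0 : ∀ k : ℤ, d k = 0 := by
    intro k
    have hT := theta_unit A b hn hM k
    have : (Theta n A b k)⁻¹ *ᵥ (Theta n A b k *ᵥ d k) = d k := by
      rw [mulVec_mulVec, nonsing_inv_mul _ ((Matrix.isUnit_iff_isUnit_det _).mp hT), one_mulVec]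
    rw [hTd k, mulVec_zero] at this
    exact this.symm
  have hx : ∀ k : ℤ, x k = x' k := fun k => sub_eq_zero.mp (hd0 k)
  refine ⟨hx, fun k => ?_⟩
  have h1 : u k • b k = u' k • b k := by
    have h := hsol k
    rw [hx k, hx (k+1), hsol' k] at h
    exact (add_left_cancel h).symm
  have h2 : (u k - u' k) • b k = 0 := by rw [sub_smul, h1, sub_self]
  rcases smul_eq_zero.mp h2 with h | h
  · linarith [sub_eq_zero.mp h]
  · exact absurd h (b_ne_zero A b hn hM k)
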